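/- Let m ≥ 1, let π : 𝔽₂^m → 𝔽₂^m be a map with coordinate functions π₀,…,π_{m-1}, and let h : 𝔽₂^m → 𝔽₂ be any Boolean function. Define f on 𝔽₂^m × 𝔽₂^m by f(a,y) = Σ_{i=0}^{m-1} y_i·π_i(a) + h(a). Then f is a bent function on 𝔽₂^{2m} if and only if π is bijective. -/

import Mathlib

/-- The Walsh transform of a Boolean function on `𝔽₂^m × 𝔽₂^m` (identified with `𝔽₂^{2m}`):
`W_f(b) = Σ_{x} (-1)^{f(x) + Σᵢ x.1ᵢ b.1ᵢ + Σᵢ x.2ᵢ b.2ᵢ}`, exponent lifted to `{0,1} ⊆ ℤ`. -/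
def walshTransform2 {m : ℕ} [NeZero m]
    (f : (ZMod m → ZMod 2) × (ZMod m → ZMod 2) → ZMod 2)
    (b : (ZMod m → ZMod 2) × (ZMod m → ZMod 2)) : ℤ :=
  ∑ x : (ZMod m → ZMod 2) × (ZMod m → ZMod 2),
    (-1 : ℤ) ^ (f x + ∑ i : ZMod m, x.1 i * b.1 i + ∑ i : ZMod m, x.2 i * b.2 i).val

/-- `f` on `𝔽₂^m × 𝔽₂^m ≅ 𝔽₂^{2m}` is bent if `W_f(b) = ±2^m` for every `b`. -/
def IsBent2 {m : ℕ} [NeZero m]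
    (f : (ZMod m → ZMod 2) × (ZMod m → ZMod 2) → ZMod 2) : Prop :=
  ∀ b, walshTransform2 f b = 2 ^ m ∨ walshTransform2 f b = -(2 ^ m)


namespace MM12

/-- The sign character `χ u = (-1)^u`. -/
def χ (u : ZMod 2) : ℤ := (-1) ^ u.val

lemma χ_add (u v : ZMod 2) : χ (u + v) = χ u * χ v := by revert u v; decide

lemma χ_cases (u : ZMod 2) : χ u = 1 ∨ χ u = -1 := by revert u; decide

lemma χ_sum {α : Type*} (s : Finset α) (g : α → ZMod 2) :
    χ (∑ i ∈ s, g i) = ∏ i ∈ s, χ (g i) := by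
  classical
  induction s using Finset.induction with
  | empty => simp [χ]
  | insert _ _ hs ih => simp [Finset.sum_insert hs, Finset.prod_insert hs, χ_add, ih]

lemma χ_pair (t c : ZMod 2) : χ (t * c) + χ ((t + 1) * c) = if c = 0 then 2 * χ (t*c) else 0 := by
  revert t c; decide

lemma sum_χ_single (c : ZMod 2) : ∑ t : ZMod 2, χ (t * c) = if c = 0 then 2 else 0 := by
  revert c; decide

/-- Orthogonality of characters on `𝔽₂^m`. -/
lemma orth (m : ℕ) [NeZero m] (c : ZMod m → ZMod 2) :
    ∑ y : ZMod m → ZMod 2, χ (∑ i : ZMod m, y i * c i) =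
      if c = 0 then (2:ℤ) ^ m else 0 := by
  classical
  have h1 : ∑ y : ZMod m → ZMod 2, χ (∑ i : ZMod m, y i * c i)
      = ∑ y : ZMod m → ZMod 2, ∏ i : ZMod m, χ (y i * c i) := by
    simp [χ_sum]
  rw [h1, ← Fintype.prod_sum fun i t => χ (t * c i)]
  by_cases hc : c = 0
  · subst hc
    simp only [Pi.zero_apply, sum_χ_single, if_pos rfl, if_true, Finset.prod_const,
      Finset.card_univ, ZMod.card]
  · obtain ⟨j, hj⟩ := Function.ne_iff.mp hc
    rw [if_neg hc]
    apply Finset.prod_eq_zero (Finset.mem_univ j)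
    rw [sum_χ_single, if_neg (by simpa using hj)]


lemma add_eq_zero_iff' (x y : ZMod 2) : x + y = 0 ↔ x = y := by revert x y; decide

lemma fun_add_eq_zero_iff {m : ℕ} (x y : ZMod m → ZMod 2) : x + y = 0 ↔ x = y := by
  constructor
  · intro H; funext i; exact (add_eq_zero_iff' _ _).mp (congrFun H i)
  · rintro rfl; funext i; exact (add_eq_zero_iff' _ _).mpr rfl

end MM12

open MM12 in
lemma walsh_eq (m : ℕ) [NeZero m]
    (π : (ZMod m → ZMod 2) → (ZMod m → ZMod 2))
    (h : (ZMod m → ZMod 2) → ZMod 2)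
    (f : (ZMod m → ZMod 2) × (ZMod m → ZMod 2) → ZMod 2)
    (hf : ∀ (a y : ZMod m → ZMod 2),
      f (a, y) = ∑ i : ZMod m, y i * π a i + h a)
    (b : (ZMod m → ZMod 2) × (ZMod m → ZMod 2)) :
    walshTransform2 f b =
      2 ^ m * ∑ a ∈ Finset.univ.filter (fun a => π a = b.2),
        χ (h a + ∑ i : ZMod m, a i * b.1 i) := by
  classical
  have key : ∀ (a y : ZMod m → ZMod 2),
      f (a, y) + ∑ i : ZMod m, a i * b.1 i + ∑ i : ZMod m, y i * b.2 i
        = (h a + ∑ i : ZMod m, a i * b.1 i) + ∑ i : ZMod m, y i * (π a + b.2) i := by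
    intro a y
    rw [hf a y]
    simp only [Pi.add_apply, mul_add, Finset.sum_add_distrib]
    ring
  have step : walshTransform2 f b
      = ∑ a : ZMod m → ZMod 2, ∑ y : ZMod m → ZMod 2,
          χ (h a + ∑ i : ZMod m, a i * b.1 i) * χ (∑ i : ZMod m, y i * (π a + b.2) i) := by
    rw [walshTransform2, Fintype.sum_prod_type]
    refine Finset.sum_congr rfl fun a _ => Finset.sum_congr rfl fun y _ => ?_
    show χ (f (a, y) + _ + _) = _
    rw [key a y, χ_add]
  rw [step]
  have inner : ∀ a : ZMod m → ZMod 2,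
      (∑ y : ZMod m → ZMod 2, χ (h a + ∑ i : ZMod m, a i * b.1 i)
          * χ (∑ i : ZMod m, y i * (π a + b.2) i))
        = χ (h a + ∑ i : ZMod m, a i * b.1 i) * (if π a = b.2 then (2:ℤ)^m else 0) := by
    intro a
    rw [← Finset.mul_sum, orth]
    simp only [fun_add_eq_zero_iff]
  simp only [inner]
  rw [Finset.sum_filter, Finset.mul_sum]
  refine Finset.sum_congr rfl fun a _ => ?_
  split <;> ring

/-- Maiorana–McFarland: with `m ≥ 1`, `π : 𝔽₂^m → 𝔽₂^m` with coordinate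
functions `πᵢ`, and any Boolean function `h` on `𝔽₂^m`, the function
`f(a,y) = Σ_{i=0}^{m-1} yᵢ·πᵢ(a) + h(a)` is bent on `𝔽₂^{2m}` iff `π` is bijective. -/
theorem statement12 (m : ℕ) (hm : 1 ≤ m) [NeZero m]
    (π : (ZMod m → ZMod 2) → (ZMod m → ZMod 2))
    (h : (ZMod m → ZMod 2) → ZMod 2)
    (f : (ZMod m → ZMod 2) × (ZMod m → ZMod 2) → ZMod 2)
    (hf : ∀ (a y : ZMod m → ZMod 2),
      f (a, y) = ∑ i : ZMod m, y i * π a i + h a) :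
    IsBent2 f ↔ Function.Bijective π := by
  classical
  open MM12 in
  constructor
  · intro hbent
    have hsurj : Function.Surjective π := by
      intro b2
      have hw := walsh_eq m π h f hf (0, b2)
      have hb := hbent (0, b2)
      rw [hw] at hb
      by_contra hno
      push_neg at hno
      have hempty : Finset.univ.filter (fun a => π a = b2) = ∅ := by
        apply Finset.filter_eq_empty_iff.mpr
        intro a _
        exact hno a
      simp only [hempty, Finset.sum_empty, mul_zero] at hb
      have h2 : (2:ℤ)^m ≠ 0 := by positivity
      rcases hb with hb | hb
      · exact h2 hb.symm
      · exact h2 (by linarith)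
    exact ⟨Finite.injective_iff_surjective.mpr hsurj, hsurj⟩
  · intro hbij
    intro b
    set e := Equiv.ofBijective π hbij with he
    have hfil : Finset.univ.filter (fun a => π a = b.2) = {e.symm b.2} := by
      ext a
      simp only [Finset.mem_filter, Finset.mem_univ, true_and, Finset.mem_singleton]
      constructor
      · intro ha; exact (Equiv.eq_symm_apply e).mpr ha
      · rintro rfl; exact e.apply_symm_apply b.2
    rw [walsh_eq m π h f hf b, hfil, Finset.sum_singleton]
    rcases χ_cases (h (e.symm b.2) + ∑ i : ZMod m, e.symm b.2 i * b.1 i) with hc | hc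
    · left; rw [hc, mul_one]
    · right; rw [hc]; ring
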